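/- For maps f, g : K → L between finite simplicial complexes, f is ∞-homotopic (Grandis homotopic) to g if and only if f is ×-homotopic to g. -/

import Mathlib

/-- An (abstract) simplicial complex: a vertex type together with a collection of
finite subsets (faces) closed under taking subsets. -/
structure Cpx : Type 1 where
  V : Type
  faces : Set (Set V)
  finite_mem : ∀ σ ∈ faces, σ.Finite
  down : ∀ σ ∈ faces, ∀ τ ⊆ σ, τ ∈ faces

/-- A map of simplicial complexes: a vertex function sending faces to faces. -/
structure CpxHom (K L : Cpx) where
  f : K.V → L.V
  map_face : ∀ σ ∈ K.faces, f '' σ ∈ L.faces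

/-- Composition of maps of simplicial complexes. -/
def CpxHom.comp {K L M : Cpx} (g : CpxHom L M) (h : CpxHom K L) : CpxHom K M where
  f := g.f ∘ h.f
  map_face := fun σ hσ => by
    rw [Set.image_comp]
    exact g.map_face _ (h.map_face _ hσ)

/-- The path complex `I_n` on vertices `{0, …, n}` with edges `{i, i+1}`. -/
def pathCpx (n : ℕ) : Cpx where
  V := Fin (n + 1)
  faces := {σ | σ.Finite ∧ ∀ a ∈ σ, ∀ b ∈ σ, (a : ℕ) ≤ (b : ℕ) + 1}
  finite_mem := fun _ hσ => hσ.1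
  down := fun σ hσ τ hτ => ⟨hσ.1.subset hτ, fun a ha b hb => hσ.2 a (hτ ha) b (hτ hb)⟩

/-- The product of simplicial complexes: a finite set is a face iff both projections
are faces. -/
def prodCpx (K L : Cpx) : Cpx where
  V := K.V × L.V
  faces := {S | S.Finite ∧ Prod.fst '' S ∈ K.faces ∧ Prod.snd '' S ∈ L.faces}
  finite_mem := fun _ hS => hS.1
  down := fun S hS T hT =>
    ⟨hS.1.subset hT, K.down _ hS.2.1 _ (Set.image_mono hT),
      L.down _ hS.2.2 _ (Set.image_mono hT)⟩

/-- `f` and `g` are `n`-homotopic: there is a map `H : K × I_n → L` with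
`H(-,0) = f` and `H(-,n) = g`. -/
def NHomotopic {K L : Cpx} (n : ℕ) (f g : CpxHom K L) : Prop :=
  ∃ H : CpxHom (prodCpx K (pathCpx n)) L,
    (∀ x : K.V, H.f (x, (0 : Fin (n + 1))) = f.f x) ∧
    (∀ x : K.V, H.f (x, Fin.last n) = g.f x)

/-- `f` and `g` are `×`-homotopic: `n`-homotopic for some `n ≥ 1`. -/
def XHomotopic {K L : Cpx} (f g : CpxHom K L) : Prop :=
  ∃ n, 1 ≤ n ∧ NHomotopic n f g

/-- The infinite path complex `I_∞` with vertex set `ℤ` and edges `{i, i+1}`. -/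
def intPathCpx : Cpx where
  V := ℤ
  faces := {σ | σ.Finite ∧ ∀ a ∈ σ, ∀ b ∈ σ, a ≤ b + 1}
  finite_mem := fun _ hσ => hσ.1
  down := fun σ hσ τ hτ => ⟨hσ.1.subset hτ, fun a ha b hb => hσ.2 a (hτ ha) b (hτ hb)⟩

/-- `f` and `g` are `∞`-homotopic (Grandis homotopic): there is a map
`H : K × I_∞ → L` which is, for each vertex `x`, eventually constant on both sides,
starting at `f x` and ending at `g x`. -/
def GrandisHomotopic {K L : Cpx} (f g : CpxHom K L) : Prop :=
  ∃ H : CpxHom (prodCpx K intPathCpx) L,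
    ∀ x : K.V, ∃ Nm Np : ℤ, Nm ≤ Np ∧
      (∀ m : ℤ, m ≤ Nm → H.f (x, m) = H.f (x, Nm)) ∧
      (∀ m : ℤ, Np ≤ m → H.f (x, m) = H.f (x, Np)) ∧
      H.f (x, Nm) = f.f x ∧ H.f (x, Np) = g.f x

/-- The simplicial map `K × I_n → K × I_∞` given by `(x, k) ↦ (x, M + k)`. -/
def shiftHom (K : Cpx) (n : ℕ) (M : ℤ) :
    CpxHom (prodCpx K (pathCpx n)) (prodCpx K intPathCpx) where
  f := fun p : K.V × Fin (n + 1) => (p.1, M + (p.2 : ℤ))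
  map_face := by
    rintro S ⟨hSfin, hS1, hS2⟩
    refine ⟨hSfin.image _, ?_, ?_⟩
    · exact Eq.mpr (congrArg (· ∈ K.faces) (Set.image_image _ _ S)) hS1
    · refine ⟨(hSfin.image _).image _, ?_⟩
      rintro a ⟨_, ⟨p, hp, rfl⟩, rfl⟩ b ⟨_, ⟨q, hq, rfl⟩, rfl⟩
      have := hS2.2 p.2 ⟨p, hp, rfl⟩ q.2 ⟨q, hq, rfl⟩
      simp only
      omega

/-- The simplicial map `K × I_∞ → K × I_n` given by clamping the second coordinate. -/
def clampHom (K : Cpx) (n : ℕ) :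
    CpxHom (prodCpx K intPathCpx) (prodCpx K (pathCpx n)) where
  f := fun p : K.V × ℤ => (p.1, ⟨min p.2.toNat n, by omega⟩)
  map_face := by
    rintro S ⟨hSfin, hS1, hS2⟩
    refine ⟨hSfin.image _, ?_, ?_⟩
    · exact Eq.mpr (congrArg (· ∈ K.faces) (Set.image_image _ _ S)) hS1
    · refine ⟨(hSfin.image _).image _, ?_⟩
      rintro a ⟨_, ⟨p, hp, rfl⟩, rfl⟩ b ⟨_, ⟨q, hq, rfl⟩, rfl⟩
      have := hS2.2 p.2 ⟨p, hp, rfl⟩ q.2 ⟨q, hq, rfl⟩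
      simp only
      omega

/-- For maps between finite simplicial complexes, `∞`-homotopic (Grandis homotopic)
is equivalent to `×`-homotopic. -/
theorem grandisHomotopic_iff_xHomotopic {K L : Cpx} [Finite K.V] [Finite L.V]
    (f g : CpxHom K L) : GrandisHomotopic f g ↔ XHomotopic f g := by
  constructor
  · rintro ⟨H, hH⟩
    choose Nm Np hle hml hpr hfx hgx using hH
    obtain ⟨M, hM⟩ := (Set.finite_range Nm).bddBelow
    obtain ⟨N, hN⟩ := (Set.finite_range Np).bddAbove
    set n : ℕ := max (N - M).toNat 1 with hn
    have hkey : ∀ (x : K.V) (k : Fin (n+1)),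
        (H.comp (shiftHom K n M)).f (x, k) = H.f (x, M + (k : ℤ)) := fun _ _ => rfl
    refine ⟨n, le_max_right _ _, H.comp (shiftHom K n M), ?_, ?_⟩
    · intro x
      have hMx : M ≤ Nm x := hM (Set.mem_range_self x)
      rw [hkey]
      have e0 : M + (((0 : Fin (n+1)) : ℕ) : ℤ) = M := by simp
      rw [e0, hml x M hMx, hfx]
    · intro x
      have hMx : M ≤ Nm x := hM (Set.mem_range_self x)
      have hNx : Np x ≤ N := hN (Set.mem_range_self x)
      rw [hkey]
      have e1 : M + (((Fin.last n : Fin (n+1)) : ℕ) : ℤ) = M + (n : ℤ) := by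
        simp [Fin.last]
      rw [e1]
      have hge : Np x ≤ M + (n : ℤ) := by have := hle x; omega
      rw [hpr x _ hge, hgx]
  · rintro ⟨n, hn1, H, h0, hlast⟩
    have hkey : ∀ (x : K.V) (m : ℤ), (H.comp (clampHom K n)).f (x, m)
        = H.f (x, ⟨min m.toNat n, by omega⟩) := fun _ _ => rfl
    refine ⟨H.comp (clampHom K n), fun x => ⟨0, (n : ℤ), by positivity, ?_, ?_, ?_, ?_⟩⟩
    · intro m hm
      rw [hkey, hkey]
      exact congrArg (fun k : Fin (n+1) => H.f (x, k)) (Fin.ext (by simp; omega))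
    · intro m hm
      rw [hkey, hkey]
      exact congrArg (fun k : Fin (n+1) => H.f (x, k)) (Fin.ext (by simp; omega))
    · rw [hkey]
      have : (⟨min (0 : ℤ).toNat n, by omega⟩ : Fin (n+1)) = 0 := Fin.ext (by simp)
      rw [this, h0]
    · rw [hkey]
      have : (⟨min (n : ℤ).toNat n, by omega⟩ : Fin (n+1)) = Fin.last n :=
        Fin.ext (by simp [Fin.last])
      rw [this, hlast]
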